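/- Let n ∈ ℕ and let A, A', B, B' be subsets of Fin n. Let N be the number of permutations σ of Fin n with σ(A) ⊆ A' and σ⁻¹(B) ⊆ B'. Then N²·C(n,#A)·C(n,#B) ≤ (n!)²·C(#A',#A)·C(#B',#B). In particular N = 0 if #A' < #A or #B' < #B, and for a uniformly random permutation σ of Fin n the probability that both containments hold is at most the geometric mean of C(#A',#A)/C(n,#A) and C(#B',#B)/C(n,#B). -/

import Mathlib

open Finset

private lemma fiber_const {n : ℕ} (A S T : Finset (Fin n)) (h : S.card = T.card) :
    (univ.filter (fun σ : Equiv.Perm (Fin n) => A.image σ = S)).card =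
    (univ.filter (fun σ : Equiv.Perm (Fin n) => A.image σ = T)).card := by
  have e : {x : Fin n // x ∈ S} ≃ {x : Fin n // x ∈ T} :=
    (Finset.equivOfCardEq h)
  set π : Equiv.Perm (Fin n) := e.extendSubtype with hπdef
  have hπ : S.image π = T := by
    apply Finset.eq_of_subset_of_card_le
    · intro x hx
      obtain ⟨y, hy, rfl⟩ := Finset.mem_image.mp hx
      exact e.extendSubtype_mem _ hy
    · rw [Finset.card_image_of_injective _ π.injective, h]
  apply Finset.card_bij (fun σ _ => π * σ)
  · intro σ hσ
    simp only [mem_filter, mem_univ, true_and] at hσ ⊢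
    have : A.image ⇑(π * σ) = (A.image ⇑σ).image ⇑π := by
      rw [Finset.image_image]; rfl
    rw [this, hσ, hπ]
  · intro σ₁ _ σ₂ _ hh
    exact mul_left_cancel hh
  · intro τ hτ
    simp only [mem_filter, mem_univ, true_and] at hτ
    refine ⟨π⁻¹ * τ, ?_, by group⟩
    simp only [mem_filter, mem_univ, true_and]
    have h0 : A.image ⇑(π⁻¹ * τ) = (A.image ⇑τ).image ⇑π⁻¹ := by
      rw [Finset.image_image]; rfl
    rw [h0, hτ, ← hπ, Finset.image_image]
    ext x
    simp [Equiv.Perm.inv_def]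

private lemma key {n : ℕ} (A A' : Finset (Fin n)) :
    (univ.filter (fun σ : Equiv.Perm (Fin n) => A.image σ ⊆ A')).card * n.choose A.card
      ≤ n.factorial * A'.card.choose A.card := by
  classical
  set a := A.card with ha
  set F : Finset (Fin n) → ℕ :=
    fun T => (univ.filter (fun σ : Equiv.Perm (Fin n) => A.image σ = T)).card with hF
  have hcard : ∀ σ : Equiv.Perm (Fin n), (A.image σ).card = a :=
    fun σ => Finset.card_image_of_injective _ σ.injective
  -- each fiber times choose n a is n!
  have hfiber : ∀ T : Finset (Fin n), T.card = a → F T * n.choose a = n.factorial := by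
    intro T hT
    have h2 : (univ : Finset (Equiv.Perm (Fin n))).card =
        ∑ T' ∈ Finset.powersetCard a (univ : Finset (Fin n)),
          (univ.filter (fun σ : Equiv.Perm (Fin n) => A.image σ = T')).card := by
      apply Finset.card_eq_sum_card_fiberwise
      intro σ _
      rw [Finset.mem_coe, Finset.mem_powersetCard]
      exact ⟨Finset.subset_univ _, hcard σ⟩
    have h3 : ∀ T' ∈ Finset.powersetCard a (univ : Finset (Fin n)), F T' = F T := by
      intro T' hT'
      rw [Finset.mem_powersetCard] at hT'
      exact fiber_const A T' T (hT'.2.trans hT.symm)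
    rw [Finset.sum_congr rfl h3, Finset.sum_const, Finset.card_powersetCard] at h2
    simp only [Finset.card_univ, Fintype.card_perm, Fintype.card_fin, smul_eq_mul] at h2
    rw [mul_comm] at h2
    omega
  have h1 : (univ.filter (fun σ : Equiv.Perm (Fin n) => A.image σ ⊆ A')).card =
      ∑ T ∈ Finset.powersetCard a A', F T := by
    rw [Finset.card_eq_sum_card_fiberwise
      (f := fun σ : Equiv.Perm (Fin n) => A.image σ) (t := Finset.powersetCard a A')
      (fun σ hσ => by
        rw [Finset.mem_coe, Finset.mem_powersetCard]
        exact ⟨(Finset.mem_filter.mp hσ).2, hcard σ⟩)]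
    apply Finset.sum_congr rfl
    intro T hT
    rw [Finset.mem_powersetCard] at hT
    rw [hF]
    congr 1
    rw [Finset.filter_filter]
    apply Finset.filter_congr
    intro σ _
    constructor
    · tauto
    · intro hh
      exact ⟨hh ▸ hT.1, hh⟩
  rw [h1, Finset.sum_mul]
  have : ∀ T ∈ Finset.powersetCard a A', F T * n.choose a = n.factorial := by
    intro T hT
    exact hfiber T (Finset.mem_powersetCard.mp hT).2
  rw [Finset.sum_congr rfl this, Finset.sum_const, Finset.card_powersetCard, smul_eq_mul,
    mul_comm]

theorem count_permutations_two_containments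
    (n : ℕ) (A A' B B' : Finset (Fin n)) :
    (Nat.card {σ : Equiv.Perm (Fin n) // A.image σ ⊆ A' ∧ B.image (σ⁻¹ : Equiv.Perm (Fin n)) ⊆ B'}) ^ 2 *
        n.choose A.card * n.choose B.card ≤
      n.factorial ^ 2 * A'.card.choose A.card * B'.card.choose B.card := by
  classical
  set N := Nat.card {σ : Equiv.Perm (Fin n) // A.image σ ⊆ A' ∧ B.image (σ⁻¹ : Equiv.Perm (Fin n)) ⊆ B'} with hN
  have hNfilter : N = (univ.filter (fun σ : Equiv.Perm (Fin n) =>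
      A.image σ ⊆ A' ∧ B.image (σ⁻¹ : Equiv.Perm (Fin n)) ⊆ B')).card := by
    rw [hN, Nat.card_eq_fintype_card, Fintype.card_subtype]
  have hNA : N ≤ (univ.filter (fun σ : Equiv.Perm (Fin n) => A.image σ ⊆ A')).card := by
    rw [hNfilter]
    apply Finset.card_le_card
    intro σ hσ
    simp only [mem_filter] at hσ ⊢
    exact ⟨hσ.1, hσ.2.1⟩
  have hNB : N ≤ (univ.filter (fun σ : Equiv.Perm (Fin n) => B.image σ ⊆ B')).card := by
    have step : N ≤ (univ.filter (fun σ : Equiv.Perm (Fin n) =>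
        B.image (σ⁻¹ : Equiv.Perm (Fin n)) ⊆ B')).card := by
      rw [hNfilter]
      apply Finset.card_le_card
      intro σ hσ
      simp only [mem_filter] at hσ ⊢
      exact ⟨hσ.1, hσ.2.2⟩
    refine step.trans_eq ?_
    apply Finset.card_bij (fun σ _ => σ⁻¹)
    · intro σ hσ
      simp only [mem_filter, mem_univ, true_and] at hσ ⊢
      exact hσ
    · intro σ₁ _ σ₂ _ hh
      exact inv_injective hh
    · intro τ hτ
      simp only [mem_filter, mem_univ, true_and] at hτ
      exact ⟨τ⁻¹, by simp only [mem_filter, mem_univ, true_and, inv_inv]; exact hτ, by simp⟩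
  calc N ^ 2 * n.choose A.card * n.choose B.card
      = (N * n.choose A.card) * (N * n.choose B.card) := by ring
    _ ≤ ((univ.filter (fun σ : Equiv.Perm (Fin n) => A.image σ ⊆ A')).card * n.choose A.card) *
        ((univ.filter (fun σ : Equiv.Perm (Fin n) => B.image σ ⊆ B')).card * n.choose B.card) :=
        Nat.mul_le_mul (Nat.mul_le_mul_right _ hNA) (Nat.mul_le_mul_right _ hNB)
    _ ≤ (n.factorial * A'.card.choose A.card) * (n.factorial * B'.card.choose B.card) :=
        Nat.mul_le_mul (key A A') (key B B')
    _ = n.factorial ^ 2 * A'.card.choose A.card * B'.card.choose B.card := by ring
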